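/- Let A be the generator of the dilation group on L²_a(W_α), i.e. Af(z) = −i(f(z) + z f′(z)) on its natural domain. For t ∈ ℝ, let M_t be multiplication by z^{it} (principal branch). Then M_t is a bounded invertible operator on L²_a(W_α) and M_t^{-1} A M_t = A + tI on the domain of A. -/

import Mathlib

open Real Complex Set

/-- The wedge (sector) of aperture `α`. -/
def Wedge (α : ℝ) : Set ℂ := {z : ℂ | z ≠ 0 ∧ |Complex.arg z| < α / 2}

/-- On the wedge, multiplication `M_t` by `z^{it}` (principal branch) is
bounded above and below, and the generator `A f = −i(f + z f′)` of the dilation group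
satisfies the commutation relation `M_t⁻¹ A M_t = A + t I`:
`A (M_t f) = M_t (A f) + t · M_t f` pointwise on the wedge. -/
theorem wedge_generator_similarity (α : ℝ) (hα : 0 < α) (hα2 : α < 2 * π) (t : ℝ) :
    (∃ c C : ℝ, 0 < c ∧ ∀ z ∈ Wedge α,
      c ≤ ‖z ^ ((t : ℂ) * Complex.I)‖ ∧
      ‖z ^ ((t : ℂ) * Complex.I)‖ ≤ C) ∧
    ∀ f : ℂ → ℂ, ∀ z ∈ Wedge α, DifferentiableAt ℂ f z →
      -Complex.I * ((fun w : ℂ => w ^ ((t : ℂ) * Complex.I) * f w) z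
          + z * deriv (fun w : ℂ => w ^ ((t : ℂ) * Complex.I) * f w) z)
        = z ^ ((t : ℂ) * Complex.I) *
            (-Complex.I * (f z + z * deriv f z) + (t : ℂ) * f z) := by
  constructor
  · refine ⟨Real.exp (-(|t| * π)), Real.exp (|t| * π), Real.exp_pos _, ?_⟩
    rintro z ⟨hz0, -⟩
    have habs : ‖z ^ ((t : ℂ) * Complex.I)‖ = Real.exp (-(Complex.arg z * t)) := by
      rw [Complex.norm_cpow_of_ne_zero hz0]
      simp [Real.exp_neg, Real.rpow_natCast]
    rw [habs]
    have hb : |Complex.arg z * t| ≤ |t| * π := by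
      rw [abs_mul, mul_comm]
      exact mul_le_mul_of_nonneg_left (Complex.abs_arg_le_pi z) (abs_nonneg t)
    rw [abs_le] at hb
    constructor
    · exact Real.exp_le_exp.mpr (by linarith)
    · exact Real.exp_le_exp.mpr (by linarith)
  · rintro f z ⟨hz0, harg⟩ hf
    set c : ℂ := (t : ℂ) * Complex.I with hc
    have hslit : z ∈ Complex.slitPlane := by
      rw [Complex.mem_slitPlane_iff_arg]
      refine ⟨fun h => ?_, hz0⟩
      rw [h] at harg
      rw [abs_of_pos Real.pi_pos] at harg
      linarith
    have hpow : HasDerivAt (fun w : ℂ => w ^ c) (c * z ^ (c - 1)) z :=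
      (Complex.hasStrictDerivAt_cpow_const hslit).hasDerivAt
    have hprod : HasDerivAt (fun w : ℂ => w ^ c * f w)
        (c * z ^ (c - 1) * f z + z ^ c * deriv f z) z :=
      hpow.mul hf.hasDerivAt
    rw [hprod.deriv]
    have hsub : z ^ (c - 1) = z ^ c / z := by
      rw [Complex.cpow_sub _ _ hz0, Complex.cpow_one]
    rw [hsub]
    have : z * (c * (z ^ c / z) * f z + z ^ c * deriv f z)
        = c * z ^ c * f z + z * z ^ c * deriv f z := by
      field_simp
    simp only [this, hc]
    ring_nf
    simp [Complex.I_sq]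
    ring
    field_simp
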